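/- The group K_3 has exactly three subgroups of index 2: Nat.card {H : Subgroup K_3 // H.index = 2} = 3. -/

import Mathlib

def braidRels (n : ℕ) : Set (FreeGroup (Fin (n - 1))) :=
  {r | (∃ i j : Fin (n - 1), 2 ≤ |(i : ℤ) - (j : ℤ)| ∧
        r = FreeGroup.of i * FreeGroup.of j * (FreeGroup.of i)⁻¹ * (FreeGroup.of j)⁻¹) ∨
       (∃ i j : Fin (n - 1), |(i : ℤ) - (j : ℤ)| = 1 ∧
        r = FreeGroup.of i * FreeGroup.of j * FreeGroup.of i *
            (FreeGroup.of j)⁻¹ * (FreeGroup.of i)⁻¹ * (FreeGroup.of j)⁻¹)}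

/-- The braid group `B n` on `n` strands, presented with generators `σ_1, …, σ_{n-1}`. -/
abbrev BraidGroup (n : ℕ) : Type := PresentedGroup (braidRels n)

/-- The generator `σ_{i+1}` of the braid group. -/
def braidGen {n : ℕ} (i : Fin (n - 1)) : BraidGroup n := PresentedGroup.of i


namespace K3

def a : BraidGroup 3 := braidGen 0
def b : BraidGroup 3 := braidGen 1

lemma braid_rel : a * b * a = b * a * b := by
  have h : (QuotientGroup.mk' (Subgroup.normalClosure (braidRels 3)))
      (FreeGroup.of (0 : Fin (3-1)) * FreeGroup.of (1 : Fin (3-1)) * FreeGroup.of 0 *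
      (FreeGroup.of 1)⁻¹ * (FreeGroup.of 0)⁻¹ * (FreeGroup.of 1)⁻¹) = 1 := by
    apply (QuotientGroup.eq_one_iff _).2
    apply Subgroup.subset_normalClosure
    exact Or.inr ⟨0, 1, by decide, rfl⟩
  have h2 : a * b * a * b⁻¹ * a⁻¹ * b⁻¹ = 1 := by
    simp [a, b, braidGen, PresentedGroup.of] at h ⊢; exact h
  calc a * b * a = (a * b * a * b⁻¹ * a⁻¹ * b⁻¹) * (b * a * b) := by group
    _ = b * a * b := by rw [h2]; group

def braidHom {G : Type*} [Group G] (A B' : G) (h : A * B' * A = B' * A * B') :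
    BraidGroup 3 →* G :=
  PresentedGroup.toGroup (f := fun i : Fin (3-1) => if i = 0 then A else B') (by
    rintro r (⟨i, j, hij, rfl⟩ | ⟨i, j, hij, rfl⟩)
    · exfalso; fin_cases i <;> fin_cases j <;> simp_all <;> omega
    · fin_cases i <;> fin_cases j <;> simp_all <;>
      first
      | (rw [show A*B'*A*B'⁻¹*A⁻¹*B'⁻¹ = (A*B'*A)*(B'*A*B')⁻¹ from by group, h]; group)
      | (rw [show B'*A*B'*A⁻¹*B'⁻¹*A⁻¹ = (B'*A*B')*(A*B'*A)⁻¹ from by group, ← h]; group))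

lemma braidHom_a {G : Type*} [Group G] (A B' : G) (h : A * B' * A = B' * A * B') :
    braidHom A B' h a = A := by
  simp [a, braidGen, braidHom, PresentedGroup.toGroup.of]

lemma braidHom_b {G : Type*} [Group G] (A B' : G) (h : A * B' * A = B' * A * B') :
    braidHom A B' h b = B' := by
  simp [b, braidGen, braidHom, PresentedGroup.toGroup.of]

end K3

namespace K3

lemma braidHom_ext {G : Type*} [Group G] (f g : BraidGroup 3 →* G)
    (ha : f a = g a) (hb : f b = g b) : f = g := by
  apply MonoidHom.eq_of_eqOn_dense (PresentedGroup.closure_range_of (braidRels 3))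
  rintro _ ⟨i, rfl⟩
  fin_cases i
  · exact ha
  · exact hb

noncomputable def e : BraidGroup 3 →* Multiplicative ℤ :=
  braidHom (Multiplicative.ofAdd 1) (Multiplicative.ofAdd 1) rfl

lemma e_a : e a = Multiplicative.ofAdd 1 := braidHom_a _ _ _
lemma e_b : e b = Multiplicative.ofAdd 1 := braidHom_b _ _ _

lemma gen_ab : Subgroup.closure {a, b} = (⊤ : Subgroup (BraidGroup 3)) := by
  have hr : Set.range (PresentedGroup.of : Fin (3-1) → BraidGroup 3) = {a, b} := by
    ext g
    constructor
    · rintro ⟨i, rfl⟩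
      fin_cases i
      · exact Or.inl rfl
      · exact Or.inr rfl
    · rintro (rfl | rfl)
      · exact ⟨0, rfl⟩
      · exact ⟨1, rfl⟩
  rw [← hr]
  exact PresentedGroup.closure_range_of (braidRels 3)

lemma of_a_eq_of_b : Abelianization.of (G := BraidGroup 3) a = Abelianization.of b := by
  have h1 := congrArg (Abelianization.of (G := BraidGroup 3)) braid_rel
  simp only [map_mul] at h1
  apply mul_right_cancel (b := Abelianization.of b * Abelianization.of a)
  calc Abelianization.of a * (Abelianization.of b * Abelianization.of a)
      = Abelianization.of a * Abelianization.of b * Abelianization.of a := by rw [mul_assoc]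
    _ = Abelianization.of b * Abelianization.of a * Abelianization.of b := h1
    _ = Abelianization.of b * (Abelianization.of b * Abelianization.of a) := by
        rw [mul_assoc, mul_comm (Abelianization.of a)]

lemma abel_gen : Subgroup.closure {Abelianization.of (G := BraidGroup 3) a} =
    (⊤ : Subgroup (Abelianization (BraidGroup 3))) := by
  have hsurj : Function.Surjective (Abelianization.of (G := BraidGroup 3)) := by
    intro z; exact QuotientGroup.mk_surjective z
  have h1 : Subgroup.map (Abelianization.of (G := BraidGroup 3)) ⊤ = ⊤ := by
    rw [← MonoidHom.range_eq_map, MonoidHom.range_eq_top]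
    exact hsurj
  rw [← gen_ab, MonoidHom.map_closure] at h1
  rw [← h1]
  congr 1
  rw [Set.image_insert_eq, Set.image_singleton, ← of_a_eq_of_b, Set.pair_eq_singleton]

lemma comm_eq_ker : commutator (BraidGroup 3) = MonoidHom.ker e := by
  apply le_antisymm (Abelianization.commutator_subset_ker e)
  intro g hg
  set s := zpowersHom (Abelianization (BraidGroup 3)) (Abelianization.of a) with hs
  have hid : (s.comp (Abelianization.lift e)).comp Abelianization.of =
      (MonoidHom.id _).comp Abelianization.of := by
    apply braidHom_ext
    · simp [s, Abelianization.lift_apply_of, e_a, zpowersHom]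
    · simp [s, Abelianization.lift_apply_of, e_b, zpowersHom, of_a_eq_of_b]
  have hretr : ∀ z : Abelianization (BraidGroup 3), s (Abelianization.lift e z) = z := by
    have : s.comp (Abelianization.lift e) = MonoidHom.id _ := by
      apply MonoidHom.eq_of_eqOn_dense abel_gen
      rintro _ rfl
      exact congrArg (fun f => f a) hid
    intro z; exact congrArg (fun f => f z) this
  have h1 : Abelianization.of g = 1 := by
    have := hretr (Abelianization.of g)
    rw [Abelianization.lift_apply_of, show e g = 1 from hg, map_one] at this
    exact this.symm
  exact (QuotientGroup.eq_one_iff g).mp h1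
end K3

namespace K3

def xg : BraidGroup 3 := b * a⁻¹
def yg : BraidGroup 3 := a * b * a⁻¹ * a⁻¹

noncomputable def N : Subgroup (BraidGroup 3) := Subgroup.closure {xg, yg}

lemma xg_mem : xg ∈ N := Subgroup.subset_closure (Set.mem_insert _ _)
lemma yg_mem : yg ∈ N := Subgroup.subset_closure (Set.mem_insert_of_mem _ rfl)

lemma conj_a_x : a * xg * a⁻¹ = yg := by unfold xg yg; group

lemma conj_ai_y : a⁻¹ * yg * a = xg := by unfold xg yg; group

lemma conj_b_x : b * xg * b⁻¹ = xg * yg * xg⁻¹ := by unfold xg yg; group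

lemma conj_b_y : b * yg * b⁻¹ = yg * xg⁻¹ := by
  have h : b * yg * b⁻¹ * (yg * xg⁻¹)⁻¹ = 1 := by
    rw [show b*yg*b⁻¹*(yg*xg⁻¹)⁻¹ = (b*a*b)*(a*b*a)⁻¹ from by unfold xg yg; group,
      ← braid_rel]
    group
  exact mul_inv_eq_one.mp h

lemma conj_ai_x : a⁻¹ * xg * a = xg * yg⁻¹ := by
  have h : a⁻¹ * xg * a * (xg * yg⁻¹)⁻¹ = 1 := by
    rw [show a⁻¹*xg*a*(xg*yg⁻¹)⁻¹ = a⁻¹*((b*a*b)*(a*b*a)⁻¹)*a from by unfold xg yg; group,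
      ← braid_rel]
    group
  exact mul_inv_eq_one.mp h

lemma conj_bi_x : b⁻¹ * xg * b = xg * yg⁻¹ := by
  have h : b⁻¹ * xg * b * (xg * yg⁻¹)⁻¹ = 1 := by
    rw [show b⁻¹*xg*b*(xg*yg⁻¹)⁻¹ = a⁻¹*((b*a*b)*(a*b*a)⁻¹)*a from by unfold xg yg; group,
      ← braid_rel]
    group
  exact mul_inv_eq_one.mp h

lemma conj_a_y : a * yg * a⁻¹ = xg⁻¹ * yg := by
  have h5 := conj_ai_x
  have h1 : a * (a⁻¹ * xg * a) * a⁻¹ = xg := by group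
  rw [h5] at h1
  have h2 : (a * xg * a⁻¹) * (a * yg⁻¹ * a⁻¹) = xg := by
    rw [show (a*xg*a⁻¹)*(a*yg⁻¹*a⁻¹) = a*(xg*yg⁻¹)*a⁻¹ from by group]; exact h1
  rw [conj_a_x] at h2
  have h3 : a * yg⁻¹ * a⁻¹ = (a * yg * a⁻¹)⁻¹ := by group
  rw [h3] at h2
  calc a * yg * a⁻¹ = (yg * (a*yg*a⁻¹)⁻¹)⁻¹ * yg := by group
    _ = xg⁻¹ * yg := by rw [h2]

lemma conj_bi_y : b⁻¹ * yg * b = yg * xg * yg⁻¹ := by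
  have h1 : b⁻¹ * (b * yg * b⁻¹) * b = yg := by group
  rw [conj_b_y] at h1
  have h2 : (b⁻¹ * yg * b) * (b⁻¹ * xg⁻¹ * b) = yg := by
    rw [show (b⁻¹*yg*b)*(b⁻¹*xg⁻¹*b) = b⁻¹*(yg*xg⁻¹)*b from by group]; exact h1
  rw [show b⁻¹ * xg⁻¹ * b = (b⁻¹ * xg * b)⁻¹ from by group, conj_bi_x] at h2
  calc b⁻¹ * yg * b = ((b⁻¹*yg*b) * (xg*yg⁻¹)⁻¹) * (xg * yg⁻¹) := by group
    _ = yg * (xg * yg⁻¹) := by rw [h2]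
    _ = yg * xg * yg⁻¹ := by group

lemma conj_closure {G : Type*} [Group G] {S : Set G} {g : G}
    (h : ∀ s ∈ S, g * s * g⁻¹ ∈ Subgroup.closure S) :
    ∀ n ∈ Subgroup.closure S, g * n * g⁻¹ ∈ Subgroup.closure S := by
  intro n hn
  induction hn using Subgroup.closure_induction with
  | mem s hs => exact h s hs
  | one => simpa using one_mem _
  | mul m k _ _ hm hk =>
      rw [show g*(m*k)*g⁻¹ = (g*m*g⁻¹)*(g*k*g⁻¹) from by group]
      exact mul_mem hm hk
  | inv m _ hm =>
      rw [show g*m⁻¹*g⁻¹ = (g*m*g⁻¹)⁻¹ from by group]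
      exact inv_mem hm

lemma conj_a : ∀ n ∈ N, a * n * a⁻¹ ∈ N := by
  apply conj_closure
  rintro s (rfl | rfl)
  · rw [conj_a_x]; exact yg_mem
  · rw [conj_a_y]; exact mul_mem (inv_mem xg_mem) yg_mem

lemma conj_ai : ∀ n ∈ N, a⁻¹ * n * a⁻¹⁻¹ ∈ N := by
  apply conj_closure
  rintro s (rfl | rfl) <;> rw [inv_inv]
  · rw [conj_ai_x]; exact mul_mem xg_mem (inv_mem yg_mem)
  · rw [conj_ai_y]; exact xg_mem

lemma conj_b : ∀ n ∈ N, b * n * b⁻¹ ∈ N := by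
  apply conj_closure
  rintro s (rfl | rfl)
  · rw [conj_b_x]; exact mul_mem (mul_mem xg_mem yg_mem) (inv_mem xg_mem)
  · rw [conj_b_y]; exact mul_mem yg_mem (inv_mem xg_mem)

lemma conj_bi : ∀ n ∈ N, b⁻¹ * n * b⁻¹⁻¹ ∈ N := by
  apply conj_closure
  rintro s (rfl | rfl) <;> rw [inv_inv]
  · rw [conj_bi_x]; exact mul_mem xg_mem (inv_mem yg_mem)
  · rw [conj_bi_y]; exact mul_mem (mul_mem yg_mem xg_mem) (inv_mem yg_mem)

lemma N_normal : N.Normal := by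
  rw [← Subgroup.normalizer_eq_top_iff]
  rw [eq_top_iff, ← gen_ab, Subgroup.closure_le]
  rintro g (rfl | rfl) <;> rw [SetLike.mem_coe, Subgroup.mem_normalizer_iff] <;> intro h
  · constructor
    · exact fun hh => conj_a h hh
    · intro hh
      have := conj_ai _ hh
      rw [inv_inv] at this
      simpa [mul_assoc] using this
  · constructor
    · exact fun hh => conj_b h hh
    · intro hh
      have := conj_bi _ hh
      rw [inv_inv] at this
      simpa [mul_assoc] using this

end K3

namespace K3

lemma mk_b_eq_mk_a :
    haveI := N_normal
    ((b : BraidGroup 3) : BraidGroup 3 ⧸ N) = (a : BraidGroup 3 ⧸ N) := by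
  haveI := N_normal
  rw [QuotientGroup.eq]
  have h : b⁻¹ * a = (a⁻¹ * (xg * a * a⁻¹)* a)⁻¹ := by unfold xg; group
  have h2 := conj_ai _ xg_mem
  rw [inv_inv] at h2
  rw [h]
  apply inv_mem
  simpa [mul_assoc] using conj_ai _ xg_mem

lemma N_le_ker : N ≤ MonoidHom.ker e := by
  rw [N, Subgroup.closure_le]
  rintro s (rfl | rfl) <;>
    simp [MonoidHom.mem_ker, xg, yg, map_mul, map_inv, e_a, e_b] <;> group

lemma comm_eq_N : commutator (BraidGroup 3) = N := by
  apply le_antisymm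
  · haveI := N_normal
    rw [commutator_def, Subgroup.commutator_le]
    intro g _ h _
    have hgen : Subgroup.closure {((a : BraidGroup 3) : BraidGroup 3 ⧸ N)} =
        (⊤ : Subgroup (BraidGroup 3 ⧸ N)) := by
      have hsurj : Function.Surjective (QuotientGroup.mk' N) := QuotientGroup.mk'_surjective N
      have h1 : Subgroup.map (QuotientGroup.mk' N) ⊤ = ⊤ := by
        rw [← MonoidHom.range_eq_map, MonoidHom.range_eq_top]; exact hsurj
      rw [← gen_ab, MonoidHom.map_closure, Set.image_insert_eq, Set.image_singleton] at h1
      rw [← h1]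
      congr 1
      rw [QuotientGroup.mk'_apply, QuotientGroup.mk'_apply, mk_b_eq_mk_a,
        Set.pair_eq_singleton]
    have hcomm : ∀ u v : BraidGroup 3 ⧸ N, Commute u v := by
      intro u v
      have hu : u ∈ Subgroup.zpowers ((a : BraidGroup 3) : BraidGroup 3 ⧸ N) := by
        rw [Subgroup.zpowers_eq_closure, hgen]; trivial
      have hv : v ∈ Subgroup.zpowers ((a : BraidGroup 3) : BraidGroup 3 ⧸ N) := by
        rw [Subgroup.zpowers_eq_closure, hgen]; trivial
      obtain ⟨m, rfl⟩ := hu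
      obtain ⟨n, rfl⟩ := hv
      exact (Commute.refl _).zpow_zpow m n
    rw [← QuotientGroup.eq_one_iff]
    open scoped commutatorElement in show (QuotientGroup.mk' N) ⁅g, h⁆ = 1
    rw [map_commutatorElement (QuotientGroup.mk' N) g h,
      commutatorElement_eq_one_iff_commute]
    exact hcomm _ _
  · rw [comm_eq_ker]; exact N_le_ker

lemma xg_mem_comm : xg ∈ commutator (BraidGroup 3) := comm_eq_N ▸ xg_mem
lemma yg_mem_comm : yg ∈ commutator (BraidGroup 3) := comm_eq_N ▸ yg_mem

noncomputable def x' : ↥(commutator (BraidGroup 3)) := ⟨xg, xg_mem_comm⟩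
noncomputable def y' : ↥(commutator (BraidGroup 3)) := ⟨yg, yg_mem_comm⟩

lemma gen_K : Subgroup.closure {x', y'} = (⊤ : Subgroup ↥(commutator (BraidGroup 3))) := by
  apply Subgroup.map_injective (commutator (BraidGroup 3)).subtype_injective
  rw [MonoidHom.map_closure, ← MonoidHom.range_eq_map, Subgroup.range_subtype,
    Set.image_insert_eq, Set.image_singleton]
  show Subgroup.closure {xg, yg} = commutator (BraidGroup 3)
  exact comm_eq_N.symm

end K3

namespace K3

abbrev M2 := Multiplicative (ZMod 2)
abbrev V := M2 × M2

def T : V ≃* V where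
  toFun p := (p.2, p.1 * p.2)
  invFun p := (p.2 * p.1, p.1)
  left_inv := by decide
  right_inv := by decide
  map_mul' := by decide

noncomputable def θ : Multiplicative ℤ →* MulAut V := zpowersHom (MulAut V) T

noncomputable abbrev W := SemidirectProduct V (Multiplicative ℤ) θ

noncomputable def Aw : W := SemidirectProduct.inr (Multiplicative.ofAdd 1)
noncomputable def Bw : W :=
  SemidirectProduct.inl ((Multiplicative.ofAdd 1, 1) : V) *
    SemidirectProduct.inr (Multiplicative.ofAdd 1)

lemma θ_one : θ (Multiplicative.ofAdd 1) = (T : MulAut V) := by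
  simp [θ, zpowersHom]

lemma braid_W : Aw * Bw * Aw = Bw * Aw * Bw := by
  apply SemidirectProduct.ext
  · simp only [Aw, Bw, SemidirectProduct.mul_left, SemidirectProduct.mul_right,
      SemidirectProduct.left_inl, SemidirectProduct.right_inl, SemidirectProduct.left_inr,
      SemidirectProduct.right_inr, map_one, one_mul, mul_one]
    simp [θ, zpowersHom]
    decide
  · simp [Aw, Bw, SemidirectProduct.mul_right]

noncomputable def fW : BraidGroup 3 →* W := braidHom Aw Bw braid_W

lemma fW_right_eq_one {k : BraidGroup 3} (hk : k ∈ commutator (BraidGroup 3)) :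
    (fW k).right = 1 := by
  have := Abelianization.commutator_subset_ker (SemidirectProduct.rightHom.comp fW) hk
  simpa [MonoidHom.mem_ker] using this

noncomputable def φK : ↥(commutator (BraidGroup 3)) →* V where
  toFun k := (fW k.1).left
  map_one' := by simp
  map_mul' k l := by
    have hr : (fW k.1).right = 1 := fW_right_eq_one k.2
    show (fW (k.1 * l.1)).left = _
    rw [map_mul, SemidirectProduct.mul_left, hr, map_one]
    simp

lemma φK_x : φK x' = ((Multiplicative.ofAdd 1, 1) : V) := by
  show (fW xg).left = _
  rw [show xg = b * a⁻¹ from rfl, map_mul, map_inv, fW, braidHom_a, braidHom_b]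
  simp [Aw, Bw, SemidirectProduct.mul_left]

lemma φK_y : φK y' = ((1, Multiplicative.ofAdd 1) : V) := by
  show (fW yg).left = _
  have hy : yg = a * (b * a⁻¹) * a⁻¹ := by unfold yg; group
  rw [hy, map_mul, map_mul, map_mul, map_inv, fW, braidHom_a, braidHom_b]
  simp only [SemidirectProduct.mul_left]
  simp [Aw, Bw, θ_one]
  decide

end K3

namespace K3

open Classical in
noncomputable def indicator {G : Type*} [Group G] (H : Subgroup G) (hH : H.index = 2) :
    G →* M2 where
  toFun g := if g ∈ H then 1 else Multiplicative.ofAdd 1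
  map_one' := if_pos (one_mem H)
  map_mul' g h := by
    show (if g * h ∈ H then (1 : M2) else Multiplicative.ofAdd 1) =
      (if g ∈ H then (1 : M2) else Multiplicative.ofAdd 1) *
      (if h ∈ H then (1 : M2) else Multiplicative.ofAdd 1)
    by_cases hg : g ∈ H <;> by_cases hh : h ∈ H
    · rw [if_pos hg, if_pos hh, if_pos (mul_mem hg hh), one_mul]
    · rw [if_pos hg, if_neg hh, one_mul,
        if_neg (fun hm => hh (((Subgroup.mul_mem_iff_of_index_two hH).1 hm).1 hg))]
    · rw [if_neg hg, if_pos hh, mul_one,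
        if_neg (fun hm => hg (((Subgroup.mul_mem_iff_of_index_two hH).1 hm).2 hh))]
    · rw [if_neg hg, if_neg hh,
        if_pos ((Subgroup.mul_mem_iff_of_index_two hH).2 (iff_of_false hg hh))]
      decide

open Classical in
lemma indicator_apply {G : Type*} [Group G] (H : Subgroup G) (hH : H.index = 2) (g : G) :
    indicator H hH g = if g ∈ H then 1 else Multiplicative.ofAdd 1 := rfl

lemma ofAdd_one_ne_one : (Multiplicative.ofAdd (1 : ZMod 2)) ≠ 1 := by decide

lemma indicator_eq_one_iff {G : Type*} [Group G] (H : Subgroup G) (hH : H.index = 2)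
    (g : G) : indicator H hH g = 1 ↔ g ∈ H := by
  classical
  rw [indicator_apply]
  by_cases hg : g ∈ H
  · simp [hg]
  · simp only [if_neg hg]
    exact ⟨fun h => absurd h ofAdd_one_ne_one, fun h => absurd h hg⟩

lemma count_lemma {G : Type*} [Group G] (x y : G)
    (hgen : Subgroup.closure {x, y} = ⊤)
    (φ : G →* V) (hx : φ x = (Multiplicative.ofAdd 1, 1))
    (hy : φ y = (1, Multiplicative.ofAdd 1)) :
    Nat.card {H : Subgroup G // H.index = 2} = 3 := by
  classical
  have hM2 : ∀ m : M2, m = 1 ∨ m = Multiplicative.ofAdd 1 := by decide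
  set F : {H : Subgroup G // H.index = 2} → {p : V // p ≠ 1} := fun H =>
    ⟨(indicator H.1 H.2 x, indicator H.1 H.2 y), by
      intro hp
      have hx1 : indicator H.1 H.2 x = 1 := congrArg Prod.fst hp
      have hy1 : indicator H.1 H.2 y = 1 := congrArg Prod.snd hp
      have hxH : x ∈ H.1 := (indicator_eq_one_iff _ _ _).1 hx1
      have hyH : y ∈ H.1 := (indicator_eq_one_iff _ _ _).1 hy1
      have hle : (⊤ : Subgroup G) ≤ H.1 := by
        rw [← hgen, Subgroup.closure_le]
        rintro s (rfl | rfl) <;> assumption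
      have heq : H.1 = ⊤ := le_antisymm le_top hle
      have h2 := H.2
      rw [heq, Subgroup.index_top] at h2
      exact absurd h2 (by norm_num)⟩ with hF
  have hinj : Function.Injective F := by
    rintro ⟨H₁, h₁⟩ ⟨H₂, h₂⟩ hFe
    have hvx : indicator H₁ h₁ x = indicator H₂ h₂ x := congrArg (fun p => p.1.1) hFe
    have hvy : indicator H₁ h₁ y = indicator H₂ h₂ y := congrArg (fun p => p.1.2) hFe
    have heq : indicator H₁ h₁ = indicator H₂ h₂ := by
      apply MonoidHom.eq_of_eqOn_dense hgen
      rintro s (rfl | rfl) <;> assumption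
    apply Subtype.ext
    ext g
    rw [← indicator_eq_one_iff H₁ h₁ g, ← indicator_eq_one_iff H₂ h₂ g, heq]
  have hsurj : Function.Surjective F := by
    rintro ⟨⟨p₁, p₂⟩, hp⟩
    set pick : V →* M2 :=
      { toFun := fun v => v.1 ^ (p₁.toAdd.val) * v.2 ^ (p₂.toAdd.val)
        map_one' := by simp
        map_mul' := fun u v => by
          show (u.1 * v.1) ^ _ * (u.2 * v.2) ^ _ = _
          rw [mul_pow, mul_pow, mul_mul_mul_comm] } with hpick
    set ψ : G →* M2 := pick.comp φ with hψ
    have key1 : ∀ q r : M2,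
        (Multiplicative.ofAdd (1 : ZMod 2)) ^ (q.toAdd.val) * (1 : M2) ^ (r.toAdd.val) = q := by
      decide
    have key2 : ∀ q r : M2,
        (1 : M2) ^ (q.toAdd.val) * (Multiplicative.ofAdd (1 : ZMod 2)) ^ (r.toAdd.val) = r := by
      decide
    have hψx : ψ x = p₁ := by
      show pick (φ x) = p₁
      rw [hx]
      exact key1 p₁ p₂
    have hψy : ψ y = p₂ := by
      show pick (φ y) = p₂
      rw [hy]
      exact key2 p₁ p₂
    have hψsurj : Function.Surjective ψ := by
      intro m
      rcases hM2 m with rfl | rfl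
      · exact ⟨1, map_one ψ⟩
      · rcases hM2 p₁ with h1 | h1
        · rcases hM2 p₂ with h2 | h2
          · exact absurd (by rw [Prod.ext_iff]; exact ⟨h1, h2⟩) hp
          · exact ⟨y, by rw [hψy, h2]⟩
        · exact ⟨x, by rw [hψx, h1]⟩
    have hidx : (MonoidHom.ker ψ).index = 2 := by
      rw [Subgroup.index_ker, MonoidHom.range_eq_top.2 hψsurj, Subgroup.card_top,
        Nat.card_eq_fintype_card]
      rfl
    refine ⟨⟨MonoidHom.ker ψ, hidx⟩, ?_⟩
    apply Subtype.ext
    have hval : ∀ g : G, indicator (MonoidHom.ker ψ) hidx g = ψ g := by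
      intro g
      by_cases hg : g ∈ MonoidHom.ker ψ
      · rw [(indicator_eq_one_iff _ _ _).2 hg]
        exact (MonoidHom.mem_ker.1 hg).symm
      · rw [indicator_apply, if_neg hg]
        have h1 : ψ g ≠ 1 := fun h => hg (MonoidHom.mem_ker.2 h)
        rcases hM2 (ψ g) with h | h
        · exact absurd h h1
        · exact h.symm
    show (indicator _ hidx x, indicator _ hidx y) = (p₁, p₂)
    rw [hval x, hval y, hψx, hψy]
  have hcard := Nat.card_eq_of_bijective F ⟨hinj, hsurj⟩
  rw [hcard, Nat.card_eq_fintype_card]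
  decide

end K3

/-- The commutator subgroup of the braid group on 3 strands has exactly three subgroups
of index 2. -/
theorem K3_subgroups_index_two :
    Nat.card {H : Subgroup ↥(commutator (BraidGroup 3)) // H.index = 2} = 3 := by
  exact K3.count_lemma K3.x' K3.y' K3.gen_K K3.φK K3.φK_x K3.φK_y
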